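/- arXiv:1910.05469 — 3 statements merged into one kernel-verified Lean document; each statement's English description precedes it below -/
import Mathlib

section
/- Let K be a field with at least n elements, let d₁,…,dₙ ∈ K be pairwise distinct, and let D = diag(d₁,…,dₙ) in the algebra UTₙ(K) of n×n upper triangular matrices. Then the set {[A, D] : A ∈ UTₙ(K)} of commutators equals J, the set of strictly upper triangular n×n matrices. -/
open Matrix

/-- Upper triangular n×n matrices (as a set). -/
def UTset (n : ℕ) (K : Type*) [Ring K] : Set (Matrix (Fin n) (Fin n) K) :=
  {A | ∀ i j : Fin n, j < i → A i j = 0}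

/-- The k-th power Jᵏ of the strictly upper triangular ideal:
matrices whose (i,j) entry vanishes unless j ≥ i + k. -/
def Jset (n : ℕ) (K : Type*) [Ring K] (k : ℕ) : Set (Matrix (Fin n) (Fin n) K) :=
  {A | ∀ i j : Fin n, (j : ℕ) < (i : ℕ) + k → A i j = 0}

/-- Evaluation of the multilinear polynomial ∑_σ α_σ x_{σ(1)}⋯x_{σ(n)}. -/
def mlEval {K A : Type*} [CommSemiring K] [Ring A] [Algebra K A] {n : ℕ}
    (α : Equiv.Perm (Fin n) → K) (a : Fin n → A) : A :=
  ∑ σ : Equiv.Perm (Fin n), α σ • (List.ofFn fun i => a (σ i)).prod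

/-- Image of a multilinear polynomial on a subset S of an algebra. -/
def mlImage {K A : Type*} [CommSemiring K] [Ring A] [Algebra K A] {n : ℕ}
    (α : Equiv.Perm (Fin n) → K) (S : Set A) : Set A :=
  {x | ∃ a : Fin n → A, (∀ i, a i ∈ S) ∧ x = mlEval α a}

theorem stmt_0 {K : Type*} [Field K] {n : ℕ} (d : Fin n → K)
    (hd : Function.Injective d) :
    {x | ∃ A ∈ UTset n K, x = A * Matrix.diagonal d - Matrix.diagonal d * A} =
      Jset n K 1 := by
  ext B
  constructor
  · rintro ⟨A, hA, rfl⟩ i j hij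
    simp only [Matrix.sub_apply, Matrix.mul_diagonal, Matrix.diagonal_mul]
    rcases lt_or_eq_of_le (Nat.lt_succ_iff.mp hij) with h | h
    · rw [hA i j h]; ring
    · have : j = i := Fin.ext h
      subst this; ring
  · intro hB
    refine ⟨Matrix.of fun i j => if (i : ℕ) < j then B i j * (d j - d i)⁻¹ else 0, ?_, ?_⟩
    · intro i j hji
      simp [Nat.not_lt.mpr (le_of_lt hji), hji.asymm]
    · ext i j
      simp only [Matrix.sub_apply, Matrix.mul_diagonal, Matrix.diagonal_mul, Matrix.of_apply]
      by_cases h : (i : ℕ) < j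
      · have hne : d j - d i ≠ 0 := sub_ne_zero.mpr fun e => (Fin.ne_of_lt h).symm (hd e)
        rw [if_pos h]
        field_simp
      · rw [if_neg h, hB i j (by omega)]; ring
end

section
/- Let K be a field. The image of any multilinear polynomial f(x₁,…,xₙ) = Σ_{σ ∈ Sₙ} α_σ x_{σ(1)}⋯x_{σ(n)} on the algebra UT₂(K) of 2×2 upper triangular matrices is exactly one of: {0}, the set J of strictly upper triangular 2×2 matrices, or all of UT₂(K). -/
open Matrix

section aux
variable {K : Type*} [Field K]

lemma mem_ut_one : (1 : Matrix (Fin 2) (Fin 2) K) ∈ UTset 2 K := by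
  intro i j h
  exact Matrix.one_apply_ne (ne_of_gt h)

lemma ut_mul {A B : Matrix (Fin 2) (Fin 2) K} (hA : A ∈ UTset 2 K) (hB : B ∈ UTset 2 K) :
    A * B ∈ UTset 2 K := by
  intro i j h
  rw [Matrix.mul_apply]
  apply Finset.sum_eq_zero
  intro k _
  rcases lt_or_ge k i with hk | hk
  · rw [hA i k hk, zero_mul]
  · rw [hB k j (lt_of_lt_of_le h hk), mul_zero]

lemma ut_listprod : ∀ (L : List (Matrix (Fin 2) (Fin 2) K)),
    (∀ A ∈ L, A ∈ UTset 2 K) → L.prod ∈ UTset 2 K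
  | [], _ => by simpa using mem_ut_one
  | A :: L, h => by
    rw [List.prod_cons]
    exact ut_mul (h A (by simp)) (ut_listprod L fun B hB => h B (by simp [hB]))

lemma diag_listprod : ∀ (L : List (Matrix (Fin 2) (Fin 2) K)),
    (∀ A ∈ L, A ∈ UTset 2 K) → ∀ i, L.prod i i = (L.map fun A => A i i).prod
  | [], _, i => by simp [Matrix.one_apply_eq]
  | A :: L, h, i => by
    have hL : ∀ B ∈ L, B ∈ UTset 2 K := fun B hB => h B (by simp [hB])
    rw [List.prod_cons, List.map_cons, List.prod_cons, Matrix.mul_apply,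
      ← diag_listprod L hL i]
    apply Finset.sum_eq_single i
    · intro k _ hk
      rcases lt_or_gt_of_ne hk with hk' | hk'
      · rw [h A (by simp) i k hk', zero_mul]
      · rw [ut_listprod L hL k i hk', mul_zero]
    · simp

lemma ut_mlEval {n : ℕ} (α : Equiv.Perm (Fin n) → K) (a : Fin n → Matrix (Fin 2) (Fin 2) K)
    (ha : ∀ i, a i ∈ UTset 2 K) : mlEval α a ∈ UTset 2 K := by
  intro i j h
  unfold mlEval
  rw [Matrix.sum_apply]
  apply Finset.sum_eq_zero
  intro σ _
  rw [Matrix.smul_apply, ut_listprod _ ?_ i j h, smul_zero]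
  intro A hA
  obtain ⟨k, rfl⟩ := List.mem_ofFn.mp hA
  exact ha _

lemma prod_onehot {A : Type*} [Monoid A] :
    ∀ {n : ℕ} (g : Fin n → A) (i₀ : Fin n), (∀ i, i ≠ i₀ → g i = 1) →
      (List.ofFn g).prod = g i₀
  | 0, _, i₀, _ => i₀.elim0
  | n+1, g, i₀, h => by
    rw [List.ofFn_succ, List.prod_cons]
    rcases eq_or_ne i₀ 0 with rfl | h0
    · have ht : (fun i : Fin n => g i.succ) = fun _ => 1 :=
        funext fun i => h _ (Fin.succ_ne_zero i)
      rw [ht]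
      simp
    · obtain ⟨j, rfl⟩ := Fin.eq_succ_of_ne_zero h0
      rw [h 0 (Fin.succ_ne_zero j).symm, one_mul]
      exact prod_onehot (fun i => g i.succ) j
        (fun i hi => h i.succ (by simpa [Fin.succ_inj] using hi))

lemma prod_scale {K' : Type*} [CommSemiring K'] {A : Type*} [Ring A] [Algebra K' A] (t : K') :
    ∀ {n : ℕ} (g g' : Fin n → A) (i₀ : Fin n), (∀ i, i ≠ i₀ → g' i = g i) →
      g' i₀ = t • g i₀ → (List.ofFn g').prod = t • (List.ofFn g).prod
  | 0, _, _, i₀, _, _ => i₀.elim0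
  | n+1, g, g', i₀, h1, h2 => by
    rw [List.ofFn_succ, List.ofFn_succ, List.prod_cons, List.prod_cons]
    rcases eq_or_ne i₀ 0 with rfl | h0
    · have ht : (fun i : Fin n => g' i.succ) = fun i => g i.succ :=
        funext fun i => h1 _ (Fin.succ_ne_zero i)
      rw [ht, h2, smul_mul_assoc]
    · obtain ⟨j, rfl⟩ := Fin.eq_succ_of_ne_zero h0
      rw [h1 0 (Fin.succ_ne_zero j).symm,
        prod_scale t (fun i => g i.succ) (fun i => g' i.succ) j
          (fun i hi => h1 i.succ (by simpa [Fin.succ_inj] using hi)) h2,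
        mul_smul_comm]


lemma mlEval_scale {n : ℕ} (α : Equiv.Perm (Fin n) → K)
    (a : Fin n → Matrix (Fin 2) (Fin 2) K) (i₀ : Fin n) (t : K) :
    mlEval α (fun i => if i = i₀ then t • a i else a i) = t • mlEval α a := by
  unfold mlEval
  rw [Finset.smul_sum]
  refine Finset.sum_congr rfl fun σ _ => ?_
  rw [prod_scale t (fun i => a (σ i)) _ (σ⁻¹ i₀) ?_ ?_, smul_comm]
  · intro i hi
    have : σ i ≠ i₀ := fun h => hi (by simp [← h])
    simp [this]
  · simp

lemma mlEval_onehot {n : ℕ} (hn : 0 < n) (α : Equiv.Perm (Fin n) → K)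
    (X : Matrix (Fin 2) (Fin 2) K) :
    mlEval α (fun i => if i = ⟨0, hn⟩ then X else 1) = (∑ σ, α σ) • X := by
  unfold mlEval
  rw [Finset.sum_smul]
  refine Finset.sum_congr rfl fun σ _ => ?_
  rw [prod_onehot _ (σ⁻¹ ⟨0, hn⟩) ?_]
  · simp
  · intro i hi
    have : σ i ≠ ⟨0, hn⟩ := fun h => hi (by simp [← h])
    simp [this]

lemma mlEval_diag {n : ℕ} (α : Equiv.Perm (Fin n) → K)
    (a : Fin n → Matrix (Fin 2) (Fin 2) K) (ha : ∀ i, a i ∈ UTset 2 K) (i : Fin 2) :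
    mlEval α a i i = (∑ σ, α σ) * ∏ k, a k i i := by
  unfold mlEval
  rw [Matrix.sum_apply, Finset.sum_mul]
  refine Finset.sum_congr rfl fun σ _ => ?_
  rw [Matrix.smul_apply, smul_eq_mul]
  congr 1
  rw [diag_listprod _ (fun A hA => by
      obtain ⟨k, rfl⟩ := List.mem_ofFn.mp hA; exact ha _) i,
    List.map_ofFn, List.prod_ofFn]
  exact Equiv.prod_comp σ (fun k => a k i i)

lemma mlEval_memJ {n : ℕ} (α : Equiv.Perm (Fin n) → K)
    (hs : ∑ σ : Equiv.Perm (Fin n), α σ = 0)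
    (a : Fin n → Matrix (Fin 2) (Fin 2) K) (ha : ∀ i, a i ∈ UTset 2 K) :
    mlEval α a ∈ Jset 2 K 1 := by
  intro i j hij
  rcases eq_or_ne i j with rfl | hne
  · rw [mlEval_diag α a ha, hs, zero_mul]
  · have hij' : j < i := by
      have : (i : ℕ) ≠ (j : ℕ) := fun h => hne (Fin.val_injective h)
      exact Fin.lt_def.mpr (by omega)
    exact ut_mlEval α a ha i j hij'

end aux

theorem stmt_5 {K : Type*} [Field K] {n : ℕ} (hn : 0 < n)
    (α : Equiv.Perm (Fin n) → K) :
    mlImage α (UTset 2 K) = {0} ∨ mlImage α (UTset 2 K) = Jset 2 K 1 ∨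
      mlImage α (UTset 2 K) = UTset 2 K := by
  by_cases hs : (∑ σ : Equiv.Perm (Fin n), α σ) = 0
  · by_cases h0 : ∀ a : Fin n → Matrix (Fin 2) (Fin 2) K,
        (∀ i, a i ∈ UTset 2 K) → mlEval α a = 0
    · left
      ext x
      simp only [Set.mem_singleton_iff, mlImage, Set.mem_setOf_eq]
      constructor
      · rintro ⟨a, ha, rfl⟩; exact h0 a ha
      · rintro rfl
        exact ⟨fun _ => 0, fun i i' j hj => rfl, (h0 _ fun i i' j hj => rfl).symm⟩
    · right; left
      push_neg at h0
      obtain ⟨a, ha, hne⟩ := h0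
      have hJ := mlEval_memJ α hs a ha
      set c : K := mlEval α a 0 1 with hc
      have hc0 : c ≠ 0 := by
        intro h
        apply hne
        ext i j
        fin_cases i <;> fin_cases j <;>
          simp only [Fin.zero_eta, Fin.mk_one, Fin.isValue]
        · exact hJ 0 0 (by norm_num)
        · exact h
        · exact hJ 1 0 (by norm_num)
        · exact hJ 1 1 (by norm_num)
      ext B
      constructor
      · rintro ⟨b, hb, rfl⟩
        exact mlEval_memJ α hs b hb
      · intro hB
        set t : K := B 0 1 * c⁻¹ with ht
        refine ⟨fun i => if i = ⟨0, hn⟩ then t • a i else a i, ?_, ?_⟩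
        · intro i
          dsimp only
          by_cases h : i = ⟨0, hn⟩
          · rw [if_pos h]
            intro i' j hj
            rw [Matrix.smul_apply, ha _ i' j hj, smul_zero]
          · rw [if_neg h]; exact ha i
        · rw [mlEval_scale α a ⟨0, hn⟩ t]
          ext i j
          rw [Matrix.smul_apply, smul_eq_mul]
          fin_cases i <;> fin_cases j <;>
            simp only [Fin.zero_eta, Fin.mk_one, Fin.isValue]
          · rw [hJ 0 0 (by norm_num), hB 0 0 (by norm_num), mul_zero]
          · rw [← hc, ht, mul_assoc, inv_mul_cancel₀ hc0, mul_one]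
          · rw [hJ 1 0 (by norm_num), hB 1 0 (by norm_num), mul_zero]
          · rw [hJ 1 1 (by norm_num), hB 1 1 (by norm_num), mul_zero]
  · right; right
    ext B
    constructor
    · rintro ⟨b, hb, rfl⟩
      exact ut_mlEval α b hb
    · intro hB
      refine ⟨fun i => if i = ⟨0, hn⟩ then (∑ σ : Equiv.Perm (Fin n), α σ)⁻¹ • B else 1, ?_, ?_⟩
      · intro i
        dsimp only
        by_cases h : i = ⟨0, hn⟩
        · rw [if_pos h]
          intro i' j hj
          rw [Matrix.smul_apply, hB i' j hj, smul_zero]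
        · rw [if_neg h]; exact mem_ut_one
      · rw [mlEval_onehot hn α, smul_smul, mul_inv_cancel₀ hs, one_smul]
end

section
/- Let K be a field with at least 3 elements, let d₁,d₂,d₃ ∈ K be pairwise distinct and D = diag(d₁,d₂,d₃) ∈ UT₃(K). Then for every m ≥ 1, the set of iterated commutators {[A, D, D, …, D] (m copies of D) : A ∈ UT₃(K)} equals J, the strictly upper triangular 3×3 matrices. -/
open Matrix

lemma iter_entry {K : Type*} [Field K] (d : Fin 3 → K) (m : ℕ)
    (A : Matrix (Fin 3) (Fin 3) K) (i j : Fin 3) :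
    ((fun X : Matrix (Fin 3) (Fin 3) K =>
        X * Matrix.diagonal d - Matrix.diagonal d * X)^[m] A) i j
      = A i j * (d j - d i) ^ m := by
  induction m with
  | zero => simp
  | succ n ih =>
    rw [Function.iterate_succ_apply']
    simp only [Matrix.sub_apply, Matrix.mul_diagonal, Matrix.diagonal_mul, ih]
    ring

theorem stmt_12 {K : Type*} [Field K] (d : Fin 3 → K)
    (hd : Function.Injective d) (m : ℕ) (hm : 1 ≤ m) :
    {x | ∃ A ∈ UTset 3 K,
        x = (fun X : Matrix (Fin 3) (Fin 3) K =>
          X * Matrix.diagonal d - Matrix.diagonal d * X)^[m] A} =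
      Jset 3 K 1 := by
  ext x
  constructor
  · rintro ⟨A, hA, rfl⟩ i j hij
    rw [iter_entry]
    rcases lt_or_eq_of_le (Nat.lt_succ_iff.mp hij) with h | h
    · rw [hA i j (by exact_mod_cast h), zero_mul]
    · have : (i : Fin 3) = j := Fin.ext h.symm
      subst this
      rw [sub_self, zero_pow (by omega), mul_zero]
  · intro hx
    refine ⟨fun i j => x i j * ((d j - d i) ^ m)⁻¹, ?_, ?_⟩
    · intro i j hij
      dsimp only
      rw [hx i j (by omega), zero_mul]
    · ext i j
      refine Eq.trans ?_ (iter_entry d m _ i j).symm; beta_reduce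
      by_cases h : (i : Fin 3) = j
      · subst h
        rw [hx i i (by omega), zero_mul, zero_mul]
      · have hne : d j - d i ≠ 0 := sub_ne_zero.mpr (fun e => h (hd e).symm)
        field_simp
end
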